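/- Let G be an m×n real matrix, C an n×n real symmetric positive definite matrix, Γ an m×m real symmetric positive definite matrix, y ∈ ℝᵐ, u₀ ∈ ℝⁿ, and set u₁ = u₀ + C G^T (G C G^T + Γ)^{-1} (y − G u₀). Then Γ^{-1/2}(y − G u₁) = Γ^{1/2}(G C G^T + Γ)^{-1}(y − G u₀), and hence ‖Γ^{-1/2}(y − G u₁)‖ ≤ ‖(G C G^T + Γ)^{-1/2} Γ^{1/2}‖² · ‖Γ^{-1/2}(y − G u₀)‖. -/

import Mathlib

open Matrix

section

open scoped ComplexOrder

/-- The positive semidefinite square root of a positive semidefinite matrix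
(the definition `Matrix.PosSemidef.sqrt` of the older Mathlib, removed since). -/
noncomputable def Matrix.PosSemidef.sqrt {n : Type*} [Fintype n] [DecidableEq n]
    {𝕜 : Type*} [RCLike 𝕜] {A : Matrix n n 𝕜} (hA : A.PosSemidef) : Matrix n n 𝕜 :=
  hA.isHermitian.eigenvectorUnitary.1 *
    diagonal ((↑) ∘ (√·) ∘ hA.isHermitian.eigenvalues) *
    (star hA.isHermitian.eigenvectorUnitary : Matrix n n 𝕜)

end

lemma Matrix.PosSemidef.sqrt_mul_self {n : Type*} [Fintype n] [DecidableEq n]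
    {A : Matrix n n ℝ} (hA : A.PosSemidef) : hA.sqrt * hA.sqrt = A := by
  have hU : (star hA.isHermitian.eigenvectorUnitary : Matrix n n ℝ) *
      hA.isHermitian.eigenvectorUnitary.1 = 1 := Unitary.coe_star_mul_self _
  have hD : diagonal ((↑) ∘ (√·) ∘ hA.isHermitian.eigenvalues) *
      diagonal ((↑) ∘ (√·) ∘ hA.isHermitian.eigenvalues) =
      diagonal (RCLike.ofReal ∘ hA.isHermitian.eigenvalues : n → ℝ) := by
    rw [diagonal_mul_diagonal]
    congr 1
    funext i
    simp [Real.mul_self_sqrt (hA.eigenvalues_nonneg i)]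
  conv_rhs => rw [hA.isHermitian.spectral_theorem, Unitary.conjStarAlgAut_apply]
  unfold Matrix.PosSemidef.sqrt
  calc _ = hA.isHermitian.eigenvectorUnitary.1 *
      diagonal ((↑) ∘ (√·) ∘ hA.isHermitian.eigenvalues) *
      ((star hA.isHermitian.eigenvectorUnitary : Matrix n n ℝ) *
      hA.isHermitian.eigenvectorUnitary.1) *
      diagonal ((↑) ∘ (√·) ∘ hA.isHermitian.eigenvalues) *
      (star hA.isHermitian.eigenvectorUnitary : Matrix n n ℝ) := by
        simp only [Matrix.mul_assoc]
        rfl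
    _ = _ := by
        rw [hU, Matrix.mul_one, Matrix.mul_assoc _ (diagonal _) (diagonal _), hD]

lemma Matrix.PosSemidef.posSemidef_sqrt {n : Type*} [Fintype n] [DecidableEq n]
    {A : Matrix n n ℝ} (hA : A.PosSemidef) : hA.sqrt.PosSemidef := by
  have hD : (diagonal ((↑) ∘ (√·) ∘ hA.isHermitian.eigenvalues) : Matrix n n ℝ).PosSemidef := by
    rw [posSemidef_diagonal_iff]
    intro i
    simp [Real.sqrt_nonneg]
  have := hD.mul_mul_conjTranspose_same (hA.isHermitian.eigenvectorUnitary.1)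
  unfold Matrix.PosSemidef.sqrt
  rwa [Matrix.star_eq_conjTranspose]

/-- The Euclidean norm of a vector in `ℝⁿ`. -/
noncomputable def euclNorm {k : ℕ} (v : Fin k → ℝ) : ℝ :=
  ‖(WithLp.equiv 2 (Fin k → ℝ)).symm v‖

/-- The operator (spectral) norm of a matrix, induced by the Euclidean norms. -/
noncomputable def l2OpNorm {k l : ℕ} (A : Matrix (Fin k) (Fin l) ℝ) : ℝ :=
  ‖LinearMap.toContinuousLinearMap (Matrix.toEuclideanLin A)‖

open scoped Matrix.Norms.L2Operator in
lemma l2OpNorm_eq_norm {k l : ℕ} (A : Matrix (Fin k) (Fin l) ℝ) : l2OpNorm A = ‖A‖ := rfl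

open scoped Matrix.Norms.L2Operator in
lemma euclNorm_mulVec_le {k l : ℕ} (A : Matrix (Fin k) (Fin l) ℝ) (v : Fin l → ℝ) :
    euclNorm (A *ᵥ v) ≤ l2OpNorm A * euclNorm v := by
  simpa [euclNorm, l2OpNorm_eq_norm] using A.l2_opNorm_mulVec ((WithLp.equiv 2 (Fin l → ℝ)).symm v)

open scoped Matrix.Norms.L2Operator in
lemma l2OpNorm_transpose_mul_self {k l : ℕ} (A : Matrix (Fin k) (Fin l) ℝ) :
    l2OpNorm (Aᵀ * A) = l2OpNorm A ^ 2 := by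
  have h : Aᴴ = Aᵀ := by ext i j; simp [Matrix.conjTranspose]
  rw [l2OpNorm_eq_norm, l2OpNorm_eq_norm, ← h, Matrix.l2_opNorm_conjTranspose_mul_self, sq]

/-- for `u₁ = u₀ + C Gᵀ (G C Gᵀ + Γ)⁻¹ (y − G u₀)` one has
`Γ^{-1/2}(y − G u₁) = Γ^{1/2}(G C Gᵀ + Γ)⁻¹(y − G u₀)`, hence
`‖Γ^{-1/2}(y − G u₁)‖ ≤ ‖(G C Gᵀ + Γ)^{-1/2} Γ^{1/2}‖² ‖Γ^{-1/2}(y − G u₀)‖`.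
(The hypothesis `hGCG` records that `G C Gᵀ + Γ` is symmetric positive definite, which follows
from positive definiteness of `C` and `Γ`.) -/
theorem one_step_residual_contraction {m n : ℕ} (G : Matrix (Fin m) (Fin n) ℝ)
    (C : Matrix (Fin n) (Fin n) ℝ) (Γ : Matrix (Fin m) (Fin m) ℝ)
    (hC : C.PosDef) (hΓ : Γ.PosDef) (hGCG : (G * C * Gᵀ + Γ).PosDef)
    (y : Fin m → ℝ) (u₀ : Fin n → ℝ) :
    let u₁ : Fin n → ℝ := u₀ + (C * Gᵀ * (G * C * Gᵀ + Γ)⁻¹) *ᵥ (y - G *ᵥ u₀)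
    (hΓ.posSemidef.sqrt)⁻¹ *ᵥ (y - G *ᵥ u₁) =
      hΓ.posSemidef.sqrt *ᵥ (G * C * Gᵀ + Γ)⁻¹ *ᵥ (y - G *ᵥ u₀) ∧
    euclNorm ((hΓ.posSemidef.sqrt)⁻¹ *ᵥ (y - G *ᵥ u₁)) ≤
      l2OpNorm ((hGCG.posSemidef.sqrt)⁻¹ * hΓ.posSemidef.sqrt) ^ 2 *
        euclNorm ((hΓ.posSemidef.sqrt)⁻¹ *ᵥ (y - G *ᵥ u₀)) := by
  intro u₁
  set B := hΓ.posSemidef.sqrt with hBdef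
  set T := hGCG.posSemidef.sqrt with hTdef
  set S := G * C * Gᵀ + Γ with hSdef
  set r := y - G *ᵥ u₀ with hrdef
  have hBB : B * B = Γ := hΓ.posSemidef.sqrt_mul_self
  have hTT : T * T = S := hGCG.posSemidef.sqrt_mul_self
  have hBsym : Bᵀ = B := by
    have := hΓ.posSemidef.posSemidef_sqrt.isHermitian
    rw [Matrix.IsHermitian, Matrix.conjTranspose_eq_transpose_of_trivial] at this
    exact this
  have hTsym : Tᵀ = T := by
    have := hGCG.posSemidef.posSemidef_sqrt.isHermitian
    rw [Matrix.IsHermitian, Matrix.conjTranspose_eq_transpose_of_trivial] at this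
    exact this
  -- invertibility
  have hSunit : IsUnit S.det := (isUnit_iff_isUnit_det _).1 hGCG.isUnit
  have hBunit : IsUnit B.det := by
    have : B.det * B.det = Γ.det := by rw [← Matrix.det_mul, hBB]
    have hΓd : Γ.det ≠ 0 := hΓ.det_pos.ne'
    have : B.det ≠ 0 := fun h => hΓd (by rw [← this, h, mul_zero])
    exact this.isUnit
  have hTunit : IsUnit T.det := by
    have : T.det * T.det = S.det := by rw [← Matrix.det_mul, hTT]
    have hSd : S.det ≠ 0 := hGCG.det_pos.ne'
    have : T.det ≠ 0 := fun h => hSd (by rw [← this, h, mul_zero])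
    exact this.isUnit
  -- Step 1: y - G u₁ = (Γ * S⁻¹) *ᵥ r
  have hres : y - G *ᵥ u₁ = (Γ * S⁻¹) *ᵥ r := by
    have : G *ᵥ u₁ = G *ᵥ u₀ + (G * (C * Gᵀ * S⁻¹)) *ᵥ r := by
      simp [u₁, Matrix.mulVec_add, Matrix.mulVec_mulVec, hSdef, hrdef]
    have hsplit : y - G *ᵥ u₁ = r - (G * C * Gᵀ * S⁻¹) *ᵥ r := by
      rw [this]
      simp only [hrdef]
      rw [← Matrix.mul_assoc, ← Matrix.mul_assoc]
      abel
    rw [hsplit]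
    have h1 : (G * C * Gᵀ * S⁻¹) + Γ * S⁻¹ = 1 := by
      rw [← Matrix.add_mul, ← hSdef, Matrix.mul_nonsing_inv _ hSunit]
    have : (Γ * S⁻¹) = 1 - G * C * Gᵀ * S⁻¹ := by
      rw [← h1]; abel
    rw [this, Matrix.sub_mulVec, Matrix.one_mulVec]
  have key : B⁻¹ *ᵥ (y - G *ᵥ u₁) = B *ᵥ S⁻¹ *ᵥ r := by
    rw [hres, Matrix.mulVec_mulVec, Matrix.mulVec_mulVec, ← Matrix.mul_assoc]
    congr 1
    have : B⁻¹ * Γ = B := by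
      rw [← hBB, ← Matrix.mul_assoc, Matrix.nonsing_inv_mul _ hBunit, Matrix.one_mul]
    rw [this]
  refine ⟨key, ?_⟩
  rw [key]
  -- Step 2: B * S⁻¹ = (T⁻¹*B)ᵀ * (T⁻¹*B) * B⁻¹
  set A := T⁻¹ * B with hAdef
  have hfac : B * S⁻¹ = (Aᵀ * A) * B⁻¹ := by
    have hA : Aᵀ * A = B * S⁻¹ * B := by
      rw [hAdef, Matrix.transpose_mul, Matrix.transpose_nonsing_inv, hBsym, hTsym]
      rw [← hTT, Matrix.mul_inv_rev]
      noncomm_ring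
    rw [hA, Matrix.mul_assoc, Matrix.mul_assoc, Matrix.mul_nonsing_inv _ hBunit, Matrix.mul_one]
  have : B *ᵥ S⁻¹ *ᵥ r = (Aᵀ * A) *ᵥ (B⁻¹ *ᵥ r) := by
    rw [Matrix.mulVec_mulVec, Matrix.mulVec_mulVec, hfac, Matrix.mul_assoc]
  rw [this, ← l2OpNorm_transpose_mul_self]
  exact euclNorm_mulVec_le _ _
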